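/- Let H_L, H_R be C² strictly convex Hamiltonians on intervals [a_L,c_L], [a_R,c_R] with H_α decreasing on [a_α,b_α] and increasing on [b_α,c_α], H_α(a_α)=H_α(c_α)=0, and let A ∈ [H₀,0] with H₀ = max(H_L(b_L), H_R(b_R)). Then the germ G_A = {(k_L,k_R) ∈ [a_L,c_L]×[a_R,c_R] : H_R(k_R)=H_L(k_L)=max(A, H_L⁺(k_L), H_R⁻(k_R))} is L¹-dissipative: for any (k_L,k_R),(k̂_L,k̂_R) ∈ G_A, sgn(k_L−k̂_L)(H_L(k_L)−H_L(k̂_L)) ≥ sgn(k_R−k̂_R)(H_R(k_R)−H_R(k̂_R)). -/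
import Mathlib


open Set

lemma real_sign_le_one (t : ℝ) : Real.sign t ≤ 1 := by
  rcases lt_trichotomy t 0 with h | h | h
  · rw [Real.sign_of_neg h]; norm_num
  · simp [h, Real.sign_zero]
  · rw [Real.sign_of_pos h]

/-- Key sign comparison lemma: if both points are in the germ and the
value at `x` is strictly bigger than at `y`, the sign on the right side
is at most the sign on the left side. -/
lemma germ_sign_aux (bL cL aR bR A : ℝ) (HL HR : ℝ → ℝ)
    (hincL : StrictMonoOn HL (Icc bL cL))
    (hdecR : StrictAntiOn HR (Icc aR bR))
    (hAL : HL bL ≤ A) (hAR : HR bR ≤ A)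
    (x1 x2 y1 y2 : ℝ)
    (hx1c : x1 ≤ cL) (hy1c : y1 ≤ cL)
    (hx2a : aR ≤ x2) (hy2a : aR ≤ y2)
    (hxR : HR x2 = HL x1)
    (hxE : HL x1 = max (max A (HL (max x1 bL))) (HR (min x2 bR)))
    (hyR : HR y2 = HL y1)
    (hyA : A ≤ HL y1)
    (hv : HL y1 < HL x1) :
    Real.sign (x2 - y2) ≤ Real.sign (x1 - y1) := by
  rcases lt_trichotomy y1 x1 with h1 | h1 | h1
  · rw [Real.sign_of_pos (by linarith : (0:ℝ) < x1 - y1)]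
    exact real_sign_le_one _
  · exact absurd (h1 ▸ hv) (lt_irrefl _)
  · -- x1 < y1 : show x2 < y2
    have hx2y2 : x2 < y2 := by
      by_contra hc
      push_neg at hc
      rcases eq_or_lt_of_le hc with h2 | h2
      · rw [h2, hxR] at hyR; linarith
      · -- y2 < x2 : derive contradictions
        have hx1bL : x1 < bL := by
          by_contra hb
          push_neg at hb
          have := hincL ⟨hb, hx1c⟩ ⟨le_of_lt (lt_of_le_of_lt hb h1), hy1c⟩ h1
          linarith
        have hx2bR : bR < x2 := by
          by_contra hb
          push_neg at hb
          have := hdecR ⟨hy2a, le_of_lt (lt_of_lt_of_le h2 hb)⟩ ⟨hx2a, hb⟩ h2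
          rw [hxR, hyR] at this
          linarith
        have hmax : max x1 bL = bL := max_eq_right (le_of_lt hx1bL)
        have hmin : min x2 bR = bR := min_eq_right (le_of_lt hx2bR)
        rw [hmax, hmin, max_eq_left hAL, max_eq_left hAR] at hxE
        linarith
    rw [Real.sign_of_neg (by linarith : x1 - y1 < 0),
        Real.sign_of_neg (by linarith : x2 - y2 < 0)]

/-- The germ $\mathcal G_A$ is $L^1$-dissipative. -/
theorem germ_L1_dissipative
    (aL bL cL aR bR cR δ A : ℝ)
    (HL HR : ℝ → ℝ)
    (haL : aL < bL) (hbL : bL < cL) (haR : aR < bR) (hbR : bR < cR)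
    (hδ : 0 < δ)
    (hCL : ContDiffOn ℝ 2 HL (Icc aL cL)) (hCR : ContDiffOn ℝ 2 HR (Icc aR cR))
    (hconvL : ∀ x ∈ Icc aL cL, δ ≤ deriv (deriv HL) x)
    (hconvR : ∀ x ∈ Icc aR cR, δ ≤ deriv (deriv HR) x)
    (hdecL : StrictAntiOn HL (Icc aL bL)) (hincL : StrictMonoOn HL (Icc bL cL))
    (hdecR : StrictAntiOn HR (Icc aR bR)) (hincR : StrictMonoOn HR (Icc bR cR))
    (h0La : HL aL = 0) (h0Lc : HL cL = 0) (h0Ra : HR aR = 0) (h0Rc : HR cR = 0)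
    (hA : A ∈ Icc (max (HL bL) (HR bR)) 0)
    (GA : Set (ℝ × ℝ))
    (hGA : GA = {k : ℝ × ℝ | k.1 ∈ Icc aL cL ∧ k.2 ∈ Icc aR cR ∧
        HR k.2 = HL k.1 ∧
        HL k.1 = max (max A (HL (max k.1 bL))) (HR (min k.2 bR))}) :
    ∀ k ∈ GA, ∀ k' ∈ GA,
      Real.sign (k.2 - k'.2) * (HR k.2 - HR k'.2) ≤
        Real.sign (k.1 - k'.1) * (HL k.1 - HL k'.1) := by
  intro k hk k' hk'
  rw [hGA] at hk hk'
  obtain ⟨hk1, hk2, hkR, hkE⟩ := hk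
  obtain ⟨hk'1, hk'2, hk'R, hk'E⟩ := hk'
  have hAL : HL bL ≤ A := le_trans (le_max_left _ _) hA.1
  have hAR : HR bR ≤ A := le_trans (le_max_right _ _) hA.1
  have hkA : A ≤ HL k.1 := hkE ▸ le_trans (le_max_left A _) (le_max_left _ _)
  have hk'A : A ≤ HL k'.1 := hk'E ▸ le_trans (le_max_left A _) (le_max_left _ _)
  rcases lt_trichotomy (HL k.1) (HL k'.1) with h | h | h
  · -- HL k.1 < HL k'.1 : apply aux with roles swapped
    have hsgn := germ_sign_aux bL cL aR bR A HL HR hincL hdecR hAL hAR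
      k'.1 k'.2 k.1 k.2 hk'1.2 hk1.2 hk'2.1 hk2.1 hk'R hk'E hkR hkA h
    have hsgn' : Real.sign (k.1 - k'.1) ≤ Real.sign (k.2 - k'.2) := by
      rw [show k'.1 - k.1 = -(k.1 - k'.1) by ring,
          show k'.2 - k.2 = -(k.2 - k'.2) by ring,
          Real.sign_neg, Real.sign_neg] at hsgn
      linarith
    calc Real.sign (k.2 - k'.2) * (HR k.2 - HR k'.2)
        = Real.sign (k.2 - k'.2) * (HL k.1 - HL k'.1) := by rw [hkR, hk'R]
      _ ≤ Real.sign (k.1 - k'.1) * (HL k.1 - HL k'.1) :=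
          mul_le_mul_of_nonpos_right hsgn' (by linarith)
  · simp [hkR, hk'R, h]
  · have hsgn := germ_sign_aux bL cL aR bR A HL HR hincL hdecR hAL hAR
      k.1 k.2 k'.1 k'.2 hk1.2 hk'1.2 hk2.1 hk'2.1 hkR hkE hk'R hk'A h
    calc Real.sign (k.2 - k'.2) * (HR k.2 - HR k'.2)
        = Real.sign (k.2 - k'.2) * (HL k.1 - HL k'.1) := by rw [hkR, hk'R]
      _ ≤ Real.sign (k.1 - k'.1) * (HL k.1 - HL k'.1) :=
          mul_le_mul_of_nonneg_right hsgn (by linarith)
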